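/- Let R be a commutative ring of prime characteristic p, let 𝔞 and 𝔟 be ideals of R, and let k ∈ ℕ. Then (𝔞𝔟)^[k] = 𝔞^[k] · 𝔟^[k], where [k] denotes the k-th generalized Frobenius power defined via the base-p expansion of k. -/

import Mathlib

open scoped BigOperators

/-- The `q`-th bracket power of an ideal: the ideal generated by `q`-th powers
of elements of `a`. -/
def bracketPow {R : Type*} [CommRing R] (a : Ideal R) (q : ℕ) : Ideal R :=
  Ideal.span ((fun x => x ^ q) '' (a : Set R))

/-- The generalized `k`-th Frobenius power of an ideal, defined via the base-`p`
digits of `k`:  `𝔞^[k] = ∏ᵢ (𝔞^[pⁱ])^(kᵢ)` where `kᵢ = k / pⁱ % p` is the `i`-th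
base-`p` digit of `k` (digits with index `> k` vanish, so the product below suffices). -/
def frobPow {R : Type*} [CommRing R] (p : ℕ) (a : Ideal R) (k : ℕ) : Ideal R :=
  ∏ i ∈ Finset.range (k + 1), bracketPow a (p ^ i) ^ (k / p ^ i % p)

lemma bracketPow_eq_map {R : Type*} [CommRing R] (p : ℕ) [hp : Fact p.Prime] [CharP R p]
    (a : Ideal R) (i : ℕ) :
    bracketPow a (p ^ i) = Ideal.map (iterateFrobenius R p i) a := by
  simp only [bracketPow, Ideal.map, iterateFrobenius_def]
  exact congrArg Ideal.span (Set.image_congr fun x _ => by rw [iterateFrobenius_def])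

lemma bracketPow_mul {R : Type*} [CommRing R] (p : ℕ) [hp : Fact p.Prime] [CharP R p]
    (a b : Ideal R) (i : ℕ) :
    bracketPow (a * b) (p ^ i) = bracketPow a (p ^ i) * bracketPow b (p ^ i) := by
  simp [bracketPow_eq_map, Ideal.map_mul]

theorem stmt_3 {R : Type*} [CommRing R] (p : ℕ) (hp : p.Prime) [CharP R p]
    (a b : Ideal R) (k : ℕ) :
    frobPow p (a * b) k = frobPow p a k * frobPow p b k := by
  haveI : Fact p.Prime := ⟨hp⟩
  unfold frobPow
  rw [← Finset.prod_mul_distrib]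
  exact Finset.prod_congr rfl fun i _ => by rw [bracketPow_mul, mul_pow]
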